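/- Let Z_n denote the zeta matrix over a commutative ring R of the boolean algebra of subsets of {0,…,n−1} ordered by inclusion. For x, y ∈ R and every natural number n, det(x·Z_{n+2} + y·Z_{n+2}ᵀ) = (det(x·Z_n + y·Z_nᵀ))² · det(x·Z_{n+1} − y·Z_{n+1}ᵀ). -/

import Mathlib

open Matrix
open scoped Kronecker

/-- The zeta matrix over a commutative ring `R` of the boolean algebra of subsets of
`{0, …, n-1}`. -/
def boolZeta (R : Type*) [CommRing R] (n : ℕ) :
    Matrix (Finset (Fin n)) (Finset (Fin n)) R :=
  Matrix.of fun A B => if A ⊆ B then 1 else 0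

/-- Finsets of a sum type correspond to pairs of finsets. -/
def finsetSumEquiv (α β : Type*) : Finset (α ⊕ β) ≃ Finset α × Finset β where
  toFun s := (s.toLeft, s.toRight)
  invFun p := p.1.disjSum p.2
  left_inv s := Finset.toLeft_disjSum_toRight
  right_inv p := by simp

lemma disjSum_subset_disjSum_iff {α β : Type*} {s t : Finset α} {u v : Finset β} :
    s.disjSum u ⊆ t.disjSum v ↔ s ⊆ t ∧ u ⊆ v := by
  constructor
  · intro h
    constructor
    · intro a ha
      simpa using h (Finset.inl_mem_disjSum.2 ha)
    · intro a ha
      simpa using h (Finset.inr_mem_disjSum.2 ha)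
  · rintro ⟨h1, h2⟩ a ha
    rcases a with a | a
    · simp only [Finset.inl_mem_disjSum] at ha ⊢; exact h1 ha
    · simp only [Finset.inr_mem_disjSum] at ha ⊢; exact h2 ha

/-- Splitting subsets of `Fin (n + m)` into a pair of subsets. -/
def splitE (n m : ℕ) : Finset (Fin (n + m)) ≃ Finset (Fin n) × Finset (Fin m) :=
  (Equiv.finsetCongr finSumFinEquiv.symm).trans (finsetSumEquiv _ _)

lemma splitE_symm_subset_iff {n m : ℕ} (p q : Finset (Fin n) × Finset (Fin m)) :
    (splitE n m).symm p ⊆ (splitE n m).symm q ↔ p.1 ⊆ q.1 ∧ p.2 ⊆ q.2 := by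
  obtain ⟨a, b⟩ := p
  obtain ⟨c, d⟩ := q
  show Finset.map _ _ ⊆ Finset.map _ _ ↔ _
  rw [Finset.map_subset_map]
  exact disjSum_subset_disjSum_iff

def q2 : Finset (Fin 2) ≃ Fin 4 where
  toFun S := if (0 : Fin 2) ∈ S then (if 1 ∈ S then 3 else 2) else (if 1 ∈ S then 1 else 0)
  invFun := ![∅, {1}, {0}, {0, 1}]
  left_inv := by decide
  right_inv := by decide

def q1 : Finset (Fin 1) ≃ Fin 2 where
  toFun S := if (0 : Fin 1) ∈ S then 1 else 0
  invFun := ![∅, {0}]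
  left_inv := by decide
  right_inv := by decide

def Z4 (R : Type*) [CommRing R] : Matrix (Fin 4) (Fin 4) R :=
  !![1,1,1,1; 0,1,0,1; 0,0,1,1; 0,0,0,1]

def A4 (R : Type*) [CommRing R] : Matrix (Fin 4) (Fin 4) R :=
  !![1,0,0,0; 0,1,0,0; 0,0,1,1; 0,0,0,1]

def B4 (R : Type*) [CommRing R] : Matrix (Fin 4) (Fin 4) R :=
  !![1,0,0,0; 0,1,0,0; 0,0,-1,0; 0,0,-1,-1]

def Z2m (R : Type*) [CommRing R] : Matrix (Fin 2) (Fin 2) R :=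
  !![1,1; 0,1]

lemma zeta2_reindex (R : Type*) [CommRing R] :
    (boolZeta R 2).submatrix q2.symm q2.symm = Z4 R := by
  ext i j
  fin_cases i <;> fin_cases j <;>
    simp [boolZeta, q2, Z4] <;>
    first
      | rfl
      | (rw [if_pos (by decide)])
      | (rw [if_neg (by decide)])
      | (intro h; exact absurd h (by decide))

lemma zeta1_reindex (R : Type*) [CommRing R] :
    (boolZeta R 1).submatrix q1.symm q1.symm = Z2m R := by
  ext i j
  fin_cases i <;> fin_cases j <;>
    simp [boolZeta, q1, Z2m] <;>
    first
      | rfl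
      | (rw [if_pos (by decide)])
      | (rw [if_neg (by decide)])
      | (intro h; exact absurd h (by decide))

def U0 : Matrix (Fin 4) (Fin 4) ℚ :=
  !![1/3, -1/3, 0, 1/3; 0, -1/3, 1/3, 0; 1, 1, 1, -2; 2, -1, -1, -1]

def V0 : Matrix (Fin 4) (Fin 4) ℚ :=
  !![2, -1, -1/3, 0; -1, -1, 1/3, 1/3; -1, 2, 1/3, 1/3; 2, -1, 0, -1/3]

lemma U0_mul_Z4_mul_V0 : U0 * Z4 ℚ * V0 = A4 ℚ := by
  ext i j
  fin_cases i <;> fin_cases j <;>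
    · simp only [U0, V0, Z4, A4, Matrix.mul_apply, Fin.sum_univ_four, Matrix.cons_val',
        Matrix.cons_val_zero, Matrix.cons_val_one, Matrix.head_cons, Matrix.cons_val_fin_one,
        Matrix.head_fin_const, Matrix.empty_val', Matrix.cons_val_two, Matrix.cons_val_three,
        Matrix.tail_cons, Matrix.of_apply, Matrix.head_val', Matrix.cons_val_succ]
      norm_num

lemma U0_mul_Z4T_mul_V0 : U0 * (Z4 ℚ)ᵀ * V0 = B4 ℚ := by
  ext i j
  fin_cases i <;> fin_cases j <;>
    · simp only [U0, V0, Z4, B4, Matrix.transpose_apply, Matrix.mul_apply, Fin.sum_univ_four,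
        Matrix.cons_val', Matrix.cons_val_zero, Matrix.cons_val_one, Matrix.head_cons,
        Matrix.cons_val_fin_one, Matrix.head_fin_const, Matrix.empty_val', Matrix.cons_val_two,
        Matrix.cons_val_three, Matrix.tail_cons, Matrix.of_apply, Matrix.head_val',
        Matrix.cons_val_succ]
      norm_num

lemma det_U0 : U0.det = 1 := by
  simp [Matrix.det_succ_row_zero, Fin.sum_univ_succ, U0, Fin.succAbove]
  norm_num

lemma det_V0 : V0.det = 1 := by
  simp [Matrix.det_succ_row_zero, Fin.sum_univ_succ, V0, Fin.succAbove]
  norm_num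

section KeyLemma

variable (S : Type*) [CommRing S] [Algebra ℚ S]

lemma map_Z4 : (Z4 ℚ).map (algebraMap ℚ S) = Z4 S := by
  ext i j
  fin_cases i <;> fin_cases j <;> simp [Z4, Matrix.vecHead, Matrix.vecTail]

lemma map_A4 : (A4 ℚ).map (algebraMap ℚ S) = A4 S := by
  ext i j
  fin_cases i <;> fin_cases j <;> simp [A4, Matrix.vecHead, Matrix.vecTail]

lemma map_B4 : (B4 ℚ).map (algebraMap ℚ S) = B4 S := by
  ext i j
  fin_cases i <;> fin_cases j <;> simp [B4, Matrix.vecHead, Matrix.vecTail]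

/-- The combined re-indexing equivalence for `n + 2`. -/
def eqv2 (n : ℕ) : Finset (Fin (n + 2)) ≃ Finset (Fin n) × Fin 4 :=
  (splitE n 2).trans ((Equiv.refl _).prodCongr q2)

/-- The combined re-indexing equivalence for `n + 1`. -/
def eqv1 (n : ℕ) : Finset (Fin (n + 1)) ≃ Finset (Fin n) × Fin 2 :=
  (splitE n 1).trans ((Equiv.refl _).prodCongr q1)

lemma zeta_n2 (n : ℕ) :
    (boolZeta S (n + 2)).submatrix (eqv2 n).symm (eqv2 n).symm
      = boolZeta S n ⊗ₖ Z4 S := by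
  ext ⟨a, i⟩ ⟨b, j⟩
  have h1 : (eqv2 n).symm (a, i) = (splitE n 2).symm (a, q2.symm i) := rfl
  have h2 : (eqv2 n).symm (b, j) = (splitE n 2).symm (b, q2.symm j) := rfl
  have h3 : Z4 S i j = boolZeta S 2 (q2.symm i) (q2.symm j) := by
    rw [← zeta2_reindex S]; rfl
  simp only [submatrix_apply, h1, h2, kroneckerMap_apply, h3, boolZeta, of_apply,
    splitE_symm_subset_iff]
  by_cases hab : a ⊆ b <;> by_cases hij : q2.symm i ⊆ q2.symm j <;>
    simp [hab, hij]

lemma zeta_n1 (n : ℕ) :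
    (boolZeta S (n + 1)).submatrix (eqv1 n).symm (eqv1 n).symm
      = boolZeta S n ⊗ₖ Z2m S := by
  ext ⟨a, i⟩ ⟨b, j⟩
  have h1 : (eqv1 n).symm (a, i) = (splitE n 1).symm (a, q1.symm i) := rfl
  have h2 : (eqv1 n).symm (b, j) = (splitE n 1).symm (b, q1.symm j) := rfl
  have h3 : Z2m S i j = boolZeta S 1 (q1.symm i) (q1.symm j) := by
    rw [← zeta1_reindex S]; rfl
  simp only [submatrix_apply, h1, h2, kroneckerMap_apply, h3, boolZeta, of_apply,
    splitE_symm_subset_iff]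
  by_cases hab : a ⊆ b <;> by_cases hij : q1.symm i ⊆ q1.symm j <;>
    simp [hab, hij]

/-- Block splitting of the index type. -/
def φe (n : ℕ) :
    ((Finset (Fin n) × Fin 2) ⊕ (Finset (Fin n) × Fin 2)) ≃ (Finset (Fin n) × Fin 4) where
  toFun := Sum.elim (fun p => (p.1, ![0, 1] p.2)) (fun p => (p.1, ![2, 3] p.2))
  invFun p := ![Sum.inl (p.1, 0), Sum.inl (p.1, 1), Sum.inr (p.1, 0), Sum.inr (p.1, 1)] p.2
  left_inv := by rintro (⟨a, i⟩ | ⟨a, i⟩) <;> fin_cases i <;> rfl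
  right_inv := by rintro ⟨a, j⟩; fin_cases j <;> rfl

lemma block_split (n : ℕ) (x y : S) :
    (x • (boolZeta S n ⊗ₖ A4 S) + y • ((boolZeta S n)ᵀ ⊗ₖ B4 S)).submatrix (φe n) (φe n)
      = fromBlocks
          (x • (boolZeta S n ⊗ₖ (1 : Matrix (Fin 2) (Fin 2) S))
            + y • ((boolZeta S n)ᵀ ⊗ₖ (1 : Matrix (Fin 2) (Fin 2) S)))
          0 0
          (x • (boolZeta S n ⊗ₖ Z2m S) - y • ((boolZeta S n)ᵀ ⊗ₖ (Z2m S)ᵀ)) := by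
  ext pq rs
  rcases pq with ⟨a, i⟩ | ⟨a, i⟩ <;> rcases rs with ⟨b, j⟩ | ⟨b, j⟩ <;>
    fin_cases i <;> fin_cases j <;>
      simp [φe, A4, B4, Z2m, fromBlocks, Matrix.one_apply, Matrix.vecHead, Matrix.vecTail,
        Matrix.smul_apply, Matrix.add_apply, Matrix.sub_apply, kroneckerMap_apply,
        Matrix.submatrix_apply, sub_eq_add_neg]

set_option maxHeartbeats 1000000 in
lemma key_recurrence (x y : S) (n : ℕ) :
    (x • boolZeta S (n + 2) + y • (boolZeta S (n + 2))ᵀ).det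
      = (x • boolZeta S n + y • (boolZeta S n)ᵀ).det ^ 2
          * (x • boolZeta S (n + 1) - y • (boolZeta S (n + 1))ᵀ).det := by
  set W := boolZeta S n with hW
  set U : Matrix (Fin 4) (Fin 4) S := U0.map (algebraMap ℚ S) with hU
  set V : Matrix (Fin 4) (Fin 4) S := V0.map (algebraMap ℚ S) with hV
  have hUZV : U * Z4 S * V = A4 S := by
    rw [hU, hV, ← map_Z4 S, ← Matrix.map_mul, ← Matrix.map_mul, U0_mul_Z4_mul_V0, map_A4]
  have hUZtV : U * (Z4 S)ᵀ * V = B4 S := by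
    rw [hU, hV, ← map_Z4 S, ← Matrix.transpose_map, ← Matrix.map_mul, ← Matrix.map_mul,
      U0_mul_Z4T_mul_V0, map_B4]
  have hdU : U.det = 1 := by
    rw [hU, ← RingHom.mapMatrix_apply, ← RingHom.map_det, det_U0, _root_.map_one]
  have hdV : V.det = 1 := by
    rw [hV, ← RingHom.mapMatrix_apply, ← RingHom.map_det, det_V0, _root_.map_one]
  -- Step 1: reindex to Kronecker form
  have h1 : (x • boolZeta S (n + 2) + y • (boolZeta S (n + 2))ᵀ).det
      = (x • (W ⊗ₖ Z4 S) + y • (Wᵀ ⊗ₖ (Z4 S)ᵀ)).det := by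
    rw [← Matrix.det_submatrix_equiv_self (eqv2 n).symm
      (x • boolZeta S (n + 2) + y • (boolZeta S (n + 2))ᵀ)]
    congr 1
    simp only [Matrix.submatrix_add, Matrix.submatrix_smul, Pi.add_apply, Pi.smul_apply]
    rw [← Matrix.transpose_submatrix, zeta_n2, kroneckerMap_transpose]
  -- Step 2: conjugation by 1 ⊗ U and 1 ⊗ V
  have h2 : (x • (W ⊗ₖ Z4 S) + y • (Wᵀ ⊗ₖ (Z4 S)ᵀ)).det
      = (x • (W ⊗ₖ A4 S) + y • (Wᵀ ⊗ₖ B4 S)).det := by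
    have e1 : ((1 : Matrix (Finset (Fin n)) (Finset (Fin n)) S) ⊗ₖ U)
          * (x • (W ⊗ₖ Z4 S) + y • (Wᵀ ⊗ₖ (Z4 S)ᵀ))
          * ((1 : Matrix (Finset (Fin n)) (Finset (Fin n)) S) ⊗ₖ V)
        = x • (W ⊗ₖ A4 S) + y • (Wᵀ ⊗ₖ B4 S) := by
      simp only [Matrix.mul_add, Matrix.add_mul, Matrix.mul_smul, Matrix.smul_mul,
        ← Matrix.mul_kronecker_mul, one_mul, mul_one]
      rw [hUZV, hUZtV]
    calc (x • (W ⊗ₖ Z4 S) + y • (Wᵀ ⊗ₖ (Z4 S)ᵀ)).det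
        = (((1 : Matrix (Finset (Fin n)) (Finset (Fin n)) S) ⊗ₖ U)
            * (x • (W ⊗ₖ Z4 S) + y • (Wᵀ ⊗ₖ (Z4 S)ᵀ))
            * ((1 : Matrix (Finset (Fin n)) (Finset (Fin n)) S) ⊗ₖ V)).det := by
          simp only [Matrix.det_mul, Matrix.det_kronecker, hdU, hdV, Matrix.det_one,
            one_pow, one_mul, mul_one]
      _ = (x • (W ⊗ₖ A4 S) + y • (Wᵀ ⊗ₖ B4 S)).det := by rw [e1]
  -- Step 3: block structure
  have h3 : (x • (W ⊗ₖ A4 S) + y • (Wᵀ ⊗ₖ B4 S)).det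
      = (x • W + y • Wᵀ).det ^ 2
          * (x • (W ⊗ₖ Z2m S) - y • (Wᵀ ⊗ₖ (Z2m S)ᵀ)).det := by
    rw [← Matrix.det_submatrix_equiv_self (φe n) (x • (W ⊗ₖ A4 S) + y • (Wᵀ ⊗ₖ B4 S)),
      block_split, Matrix.det_fromBlocks_zero₂₁]
    congr 1
    have heq : x • (W ⊗ₖ (1 : Matrix (Fin 2) (Fin 2) S))
          + y • (Wᵀ ⊗ₖ (1 : Matrix (Fin 2) (Fin 2) S))
        = (x • W + y • Wᵀ) ⊗ₖ (1 : Matrix (Fin 2) (Fin 2) S) := by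
      rw [Matrix.add_kronecker, Matrix.smul_kronecker, Matrix.smul_kronecker]
    rw [heq, Matrix.det_kronecker, Matrix.det_one, one_pow, mul_one, Fintype.card_fin]
  -- Step 4: recognize the (n+1) matrix
  have h4 : (x • (W ⊗ₖ Z2m S) - y • (Wᵀ ⊗ₖ (Z2m S)ᵀ)).det
      = (x • boolZeta S (n + 1) - y • (boolZeta S (n + 1))ᵀ).det := by
    rw [← Matrix.det_submatrix_equiv_self (eqv1 n).symm
      (x • boolZeta S (n + 1) - y • (boolZeta S (n + 1))ᵀ)]
    congr 1
    simp only [Matrix.submatrix_sub, Matrix.submatrix_smul, Pi.sub_apply, Pi.smul_apply]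
    rw [← Matrix.transpose_submatrix, zeta_n1, kroneckerMap_transpose]
  rw [h1, h2, h3, h4]

end KeyLemma

section Transfer

variable {C D : Type*} [CommRing C] [CommRing D]

lemma map_plusMatrix (f : C →+* D) (u v : C) (k : ℕ) :
    (u • boolZeta C k + v • (boolZeta C k)ᵀ).map f
      = f u • boolZeta D k + f v • (boolZeta D k)ᵀ := by
  ext a b
  simp only [boolZeta, Matrix.map_apply, Matrix.add_apply, Matrix.smul_apply,
    Matrix.transpose_apply, Matrix.of_apply, smul_eq_mul, map_add, _root_.map_mul, apply_ite f,
    _root_.map_one, _root_.map_zero, _root_.map_mul]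

lemma map_minusMatrix (f : C →+* D) (u v : C) (k : ℕ) :
    (u • boolZeta C k - v • (boolZeta C k)ᵀ).map f
      = f u • boolZeta D k - f v • (boolZeta D k)ᵀ := by
  ext a b
  simp only [boolZeta, Matrix.map_apply, Matrix.sub_apply, Matrix.smul_apply,
    Matrix.transpose_apply, Matrix.of_apply, smul_eq_mul, map_sub, _root_.map_mul, apply_ite f,
    _root_.map_one, _root_.map_zero, _root_.map_mul]

lemma ringHom_det_plus (f : C →+* D) (u v : C) (k : ℕ) :
    f ((u • boolZeta C k + v • (boolZeta C k)ᵀ).det)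
      = (f u • boolZeta D k + f v • (boolZeta D k)ᵀ).det := by
  rw [RingHom.map_det, RingHom.mapMatrix_apply, map_plusMatrix]

lemma ringHom_det_minus (f : C →+* D) (u v : C) (k : ℕ) :
    f ((u • boolZeta C k - v • (boolZeta C k)ᵀ).det)
      = (f u • boolZeta D k - f v • (boolZeta D k)ᵀ).det := by
  rw [RingHom.map_det, RingHom.mapMatrix_apply, map_minusMatrix]

end Transfer

/-- The recurrence
`det (x Z_{n+2} + y Z_{n+2}ᵀ) = det (x Z_n + y Z_nᵀ)² · det (x Z_{n+1} - y Z_{n+1}ᵀ)`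
for the zeta matrices of the boolean algebras. -/
theorem det_boolZeta_recurrence (R : Type*) [CommRing R] (x y : R) (n : ℕ) :
    (x • boolZeta R (n + 2) + y • (boolZeta R (n + 2))ᵀ).det
      = (x • boolZeta R n + y • (boolZeta R n)ᵀ).det ^ 2
          * (x • boolZeta R (n + 1) - y • (boolZeta R (n + 1))ᵀ).det := by
  classical
  set xA : MvPolynomial (Fin 2) ℤ := MvPolynomial.X 0 with hxA
  set yA : MvPolynomial (Fin 2) ℤ := MvPolynomial.X 1 with hyA
  have hA : (xA • boolZeta (MvPolynomial (Fin 2) ℤ) (n + 2)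
        + yA • (boolZeta (MvPolynomial (Fin 2) ℤ) (n + 2))ᵀ).det
      = (xA • boolZeta (MvPolynomial (Fin 2) ℤ) n
          + yA • (boolZeta (MvPolynomial (Fin 2) ℤ) n)ᵀ).det ^ 2
        * (xA • boolZeta (MvPolynomial (Fin 2) ℤ) (n + 1)
          - yA • (boolZeta (MvPolynomial (Fin 2) ℤ) (n + 1))ᵀ).det := by
    have hinj : Function.Injective
        (MvPolynomial.map (Int.castRingHom ℚ) :
          MvPolynomial (Fin 2) ℤ →+* MvPolynomial (Fin 2) ℚ) :=
      MvPolynomial.map_injective _ Int.cast_injective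
    apply hinj
    rw [_root_.map_mul, map_pow, ringHom_det_plus, ringHom_det_plus, ringHom_det_minus,
      hxA, hyA, MvPolynomial.map_X, MvPolynomial.map_X]
    exact key_recurrence (MvPolynomial (Fin 2) ℚ) (MvPolynomial.X 0) (MvPolynomial.X 1) n
  have := congrArg (MvPolynomial.eval₂Hom (Int.castRingHom R) ![x, y]) hA
  rw [_root_.map_mul, map_pow, ringHom_det_plus, ringHom_det_plus, ringHom_det_minus,
    hxA, hyA, MvPolynomial.eval₂Hom_X', MvPolynomial.eval₂Hom_X'] at this
  simpa using this
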